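/- For every integer m ≥ 1, the polynomial P(2^{2m}−1)(x) is congruent to 1 + 2·S^o_{m−1}(x) modulo 4, i.e. every coefficient of P(2^{2m}−1)(x) − (1 + 2·S^o_{m−1}(x)) is divisible by 4. -/

import Mathlib

open Polynomial

/-- The Thue–Morse ±1 sequence: t 0 = 1, t (2n) = t n, t (2n+1) = -t n. -/
def tmSeq : ℕ → ℤ
  | 0 => 1
  | n + 1 => if (n + 1) % 2 = 0 then tmSeq ((n + 1) / 2) else -tmSeq ((n + 1) / 2)
decreasing_by all_goals exact Nat.div_lt_self (Nat.succ_pos n) one_lt_two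

/-- Numerators of the convergents of the Thue–Morse continued fraction. -/
noncomputable def Ptm : ℕ → ℤ[X]
  | 0 => 1
  | 1 => 1
  | n + 2 => Ptm (n + 1) + C (tmSeq (n + 2)) * X * Ptm n

/-- Denominators of the convergents of the Thue–Morse continued fraction. -/
noncomputable def Qtm : ℕ → ℤ[X]
  | 0 => 1
  | 1 => 1 - X
  | n + 2 => Qtm (n + 1) + C (tmSeq (n + 2)) * X * Qtm n

/-- S_m(x) = Σ_{j<m} x^(2^j). -/
noncomputable def Spoly (m : ℕ) : ℤ[X] := ∑ j ∈ Finset.range m, X ^ (2 ^ j)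
/-- S^e_m(x) = Σ_{j<m} x^(2^(2j)). -/
noncomputable def SePoly (m : ℕ) : ℤ[X] := ∑ j ∈ Finset.range m, X ^ (2 ^ (2 * j))
/-- S^o_m(x) = Σ_{j<m} x^(2^(2j+1)). -/
noncomputable def SoPoly (m : ℕ) : ℤ[X] := ∑ j ∈ Finset.range m, X ^ (2 ^ (2 * j + 1))

/-! ### Basic facts about the Thue–Morse sequence -/

lemma tmSeq_zero : tmSeq 0 = 1 := by rw [tmSeq]

lemma tmSeq_two_mul (n : ℕ) : tmSeq (2 * n) = tmSeq n := by
  rcases n with _ | k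
  · rfl
  · have h : 2 * (k + 1) = (2 * k + 1) + 1 := by omega
    rw [h, tmSeq]
    have h2 : (2 * k + 1 + 1) % 2 = 0 := by omega
    have h3 : (2 * k + 1 + 1) / 2 = k + 1 := by omega
    simp [h2, h3]

lemma tmSeq_two_mul_add_one (n : ℕ) : tmSeq (2 * n + 1) = -tmSeq n := by
  have h : 2 * n + 1 = (2 * n) + 1 := rfl
  rw [h, tmSeq]
  have h2 : (2 * n + 1) % 2 ≠ 0 := by omega
  have h3 : (2 * n + 1) / 2 = n := by omega
  simp [h2, h3]

lemma tmSeq_block : ∀ n : ℕ, ∀ j < 2 ^ n, tmSeq (2 ^ n + j) = -tmSeq j := by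
  intro n
  induction n with
  | zero =>
    intro j hj
    interval_cases j
    have h := tmSeq_two_mul_add_one 0
    norm_num at h
    rw [show (2:ℕ) ^ 0 + 0 = 1 by norm_num]
    exact h
  | succ n ih =>
    intro j hj
    rcases Nat.even_or_odd j with ⟨i, hi⟩ | ⟨i, hi⟩
    · subst hi
      have h1 : 2 ^ (n + 1) + (i + i) = 2 * (2 ^ n + i) := by ring
      have h2 : i + i = 2 * i := by ring
      rw [h1, tmSeq_two_mul, h2, tmSeq_two_mul]
      exact ih i (by omega)
    · subst hi
      have h1 : 2 ^ (n + 1) + (2 * i + 1) = 2 * (2 ^ n + i) + 1 := by ring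
      rw [h1, tmSeq_two_mul_add_one, tmSeq_two_mul_add_one, ih i (by omega)]

/-! ### The involution p(x) ↦ p(-x) on ℤ[X] -/

noncomputable def psi (p : ℤ[X]) : ℤ[X] := p.comp (-X)

lemma psi_add (p q : ℤ[X]) : psi (p + q) = psi p + psi q := add_comp
lemma psi_mul (p q : ℤ[X]) : psi (p * q) = psi p * psi q := mul_comp p q _
lemma psi_neg (p : ℤ[X]) : psi (-p) = -psi p := neg_comp
lemma psi_one : psi (1 : ℤ[X]) = 1 := one_comp
lemma psi_zero : psi (0 : ℤ[X]) = 0 := zero_comp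
lemma psi_X : psi (X : ℤ[X]) = -X := X_comp
lemma psi_C (t : ℤ) : psi (C t) = C t := C_comp

lemma psi_psi (p : ℤ[X]) : psi (psi p) = p := by
  unfold psi
  rw [comp_assoc]
  simp

/-! ### 2×2 matrices over ℤ[X] -/

@[ext]
structure M2 where
  e11 : ℤ[X]
  e12 : ℤ[X]
  e21 : ℤ[X]
  e22 : ℤ[X]

noncomputable def M2.mul (A B : M2) : M2 :=
  ⟨A.e11 * B.e11 + A.e12 * B.e21, A.e11 * B.e12 + A.e12 * B.e22,
   A.e21 * B.e11 + A.e22 * B.e21, A.e21 * B.e12 + A.e22 * B.e22⟩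

noncomputable def M2.one : M2 := ⟨1, 0, 0, 1⟩

lemma M2.mul_assoc (A B C : M2) : (A.mul B).mul C = A.mul (B.mul C) := by
  apply M2.ext <;> simp only [M2.mul] <;> ring

lemma M2.one_mul (A : M2) : M2.one.mul A = A := by
  apply M2.ext <;> simp [M2.mul, M2.one]

noncomputable def M2.bar (A : M2) : M2 := ⟨psi A.e11, psi A.e12, psi A.e21, psi A.e22⟩

lemma M2.bar_mul (A B : M2) : (A.mul B).bar = A.bar.mul B.bar := by
  apply M2.ext <;> simp only [M2.mul, M2.bar, psi_add, psi_mul]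

/-- elementary continued-fraction transfer matrix at index `i` -/
noncomputable def mM (i : ℕ) : M2 := ⟨1, C (tmSeq i) * X, 1, 0⟩

/-- product of transfer matrices for indices s, s+1, ..., s+l-1. -/
noncomputable def prodT (s : ℕ) : ℕ → M2
  | 0 => M2.one
  | l + 1 => (mM (s + l)).mul (prodT s l)

lemma prodT_split (s l1 : ℕ) : ∀ l2, prodT s (l1 + l2) = (prodT (s + l1) l2).mul (prodT s l1) := by
  intro l2
  induction l2 with
  | zero => simp [prodT, M2.one_mul]
  | succ l2 ih =>
    have h : l1 + (l2 + 1) = (l1 + l2) + 1 := by omega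
    rw [h, prodT, ih, prodT, M2.mul_assoc]
    have h2 : s + (l1 + l2) = s + l1 + l2 := by omega
    rw [h2]

lemma prodT_congr (s s' : ℕ) : ∀ l, (∀ j < l, tmSeq (s + j) = tmSeq (s' + j)) →
    prodT s l = prodT s' l := by
  intro l
  induction l with
  | zero => intro _; rfl
  | succ l ih =>
    intro h
    have hm : mM (s + l) = mM (s' + l) := by
      unfold mM
      rw [h l (by omega)]
    rw [prodT, prodT, ih (fun j hj => h j (by omega)), hm]

lemma prodT_sign (s s' : ℕ) : ∀ l, (∀ j < l, tmSeq (s + j) = -tmSeq (s' + j)) →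
    prodT s l = (prodT s' l).bar := by
  intro l
  induction l with
  | zero =>
    intro _
    simp [prodT, M2.one, M2.bar, psi_one, psi_zero]
  | succ l ih =>
    intro h
    rw [prodT, prodT, M2.bar_mul, ih (fun j hj => h j (by omega))]
    congr 1
    apply M2.ext <;>
      simp only [mM, M2.bar, psi_one, psi_zero, psi_mul, psi_C, psi_X, h l (by omega), map_neg] <;>
      ring

/-! ### Linkage between the matrix products and P, Q -/

lemma Ptm_step (n : ℕ) : Ptm (n + 2) = Ptm (n + 1) + C (tmSeq (n + 2)) * X * Ptm n := by
  rw [Ptm]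

lemma Qtm_step (n : ℕ) : Qtm (n + 2) = Qtm (n + 1) + C (tmSeq (n + 2)) * X * Qtm n := by
  rw [Qtm]

lemma vecPQ (n : ℕ) : ∀ l : ℕ,
    Ptm (n + 1 + l) = (prodT (n + 2) l).e11 * Ptm (n + 1) + (prodT (n + 2) l).e12 * Ptm n ∧
    Ptm (n + l) = (prodT (n + 2) l).e21 * Ptm (n + 1) + (prodT (n + 2) l).e22 * Ptm n ∧
    Qtm (n + 1 + l) = (prodT (n + 2) l).e11 * Qtm (n + 1) + (prodT (n + 2) l).e12 * Qtm n ∧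
    Qtm (n + l) = (prodT (n + 2) l).e21 * Qtm (n + 1) + (prodT (n + 2) l).e22 * Qtm n := by
  intro l
  induction l with
  | zero =>
    refine ⟨?_, ?_, ?_, ?_⟩ <;> simp [prodT, M2.one]
  | succ l ih =>
    obtain ⟨h1, h2, h3, h4⟩ := ih
    rw [prodT]
    have e1 : n + 1 + (l + 1) = (n + l) + 2 := by omega
    have e2 : n + (l + 1) = n + 1 + l := by omega
    have e3 : n + 2 + l = (n + l) + 2 := by omega
    rw [e1, e2, e3, Ptm_step, Qtm_step]
    have eP : Ptm (n + l + 1) = Ptm (n + 1 + l) := by rw [show n + l + 1 = n + 1 + l by omega]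
    have eQ : Qtm (n + l + 1) = Qtm (n + 1 + l) := by rw [show n + l + 1 = n + 1 + l by omega]
    rw [eP, eQ, h1, h2, h3, h4]
    simp only [M2.mul, mM]
    refine ⟨by ring, by ring, by ring, by ring⟩

/-- extraction of the four doubling recurrences from the block matrix identity -/
lemma extractRecs (n : ℕ) (hn : 1 ≤ n)
    (hE : prodT (2 ^ n) (2 ^ n) =
      ⟨psi (Qtm (2 ^ n - 1)), -X * psi (Ptm (2 ^ n - 1)),
       psi (Qtm (2 ^ n - 2)), -X * psi (Ptm (2 ^ n - 2))⟩) :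
    Ptm (2 ^ (n + 1) - 1) =
      psi (Qtm (2 ^ n - 1)) * Ptm (2 ^ n - 1) + -X * psi (Ptm (2 ^ n - 1)) * Ptm (2 ^ n - 2) ∧
    Ptm (2 ^ (n + 1) - 2) =
      psi (Qtm (2 ^ n - 2)) * Ptm (2 ^ n - 1) + -X * psi (Ptm (2 ^ n - 2)) * Ptm (2 ^ n - 2) ∧
    Qtm (2 ^ (n + 1) - 1) =
      psi (Qtm (2 ^ n - 1)) * Qtm (2 ^ n - 1) + -X * psi (Ptm (2 ^ n - 1)) * Qtm (2 ^ n - 2) ∧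
    Qtm (2 ^ (n + 1) - 2) =
      psi (Qtm (2 ^ n - 2)) * Qtm (2 ^ n - 1) + -X * psi (Ptm (2 ^ n - 2)) * Qtm (2 ^ n - 2) := by
  have hK : 2 ≤ 2 ^ n := by
    calc 2 = 2 ^ 1 := rfl
    _ ≤ 2 ^ n := Nat.pow_le_pow_right (by norm_num) hn
  have hv := vecPQ (2 ^ n - 2) (2 ^ n)
  have i1 : 2 ^ n - 2 + 1 = 2 ^ n - 1 := by omega
  have i2 : 2 ^ n - 2 + 2 = 2 ^ n := by omega
  rw [i1, i2] at hv
  have i3 : 2 ^ n - 1 + 2 ^ n = 2 ^ (n + 1) - 1 := by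
    have : 2 ^ (n + 1) = 2 ^ n + 2 ^ n := by rw [pow_succ]; omega
    omega
  have i4 : 2 ^ n - 2 + 2 ^ n = 2 ^ (n + 1) - 2 := by
    have : 2 ^ (n + 1) = 2 ^ n + 2 ^ n := by rw [pow_succ]; omega
    omega
  rw [i3, i4, hE] at hv
  exact hv

/-- The exact shape of the block matrix product over [2^n, 2^(n+1)). -/
lemma Ematrix (n : ℕ) (hn : 1 ≤ n) :
    prodT (2 ^ n) (2 ^ n) =
      ⟨psi (Qtm (2 ^ n - 1)), -X * psi (Ptm (2 ^ n - 1)),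
       psi (Qtm (2 ^ n - 2)), -X * psi (Ptm (2 ^ n - 2))⟩ := by
  induction n, hn using Nat.le_induction with
  | base =>
    have t1 : tmSeq 1 = -1 := by
      have h := tmSeq_two_mul_add_one 0
      rw [tmSeq_zero] at h
      norm_num at h
      exact h
    have t2 : tmSeq 2 = -1 := by
      have := tmSeq_two_mul 1
      rw [t1] at this
      simpa using this
    have t3 : tmSeq 3 = 1 := by
      have := tmSeq_two_mul_add_one 1
      rw [t1] at this
      simpa using this
    show prodT 2 2 = _
    norm_num
    have hPr : prodT 2 2 = (mM 3).mul ((mM 2).mul M2.one) := rfl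
    rw [hPr]
    simp only [mM, M2.mul, M2.one, t2, t3, M2.mk.injEq]
    have hQ1 : Qtm 1 = 1 - X := by rw [Qtm]
    have hQ0 : Qtm 0 = 1 := by rw [Qtm]
    have hP1 : Ptm 1 = 1 := by rw [Ptm]
    have hP0 : Ptm 0 = 1 := by rw [Ptm]
    rw [hQ1, hQ0, hP1, hP0]
    simp only [psi_one, map_neg, map_one]
    refine ⟨?_, ?_, ?_, ?_⟩
    · have : psi (1 - X) = 1 + X := by
        unfold psi; simp [sub_comp]
      rw [this]; ring
    · ring
    · ring
    · ring
  | succ n hn ih =>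
    have hpos : 0 < 2 ^ n := pow_pos (by norm_num) n
    have h2n : 2 ^ (n + 1) = 2 ^ n + 2 ^ n := by rw [pow_succ]; omega
    have hsplit := prodT_split (2 ^ (n + 1)) (2 ^ n) (2 ^ n)
    rw [← h2n] at hsplit
    have hcongr : prodT (2 ^ (n + 1)) (2 ^ n) = prodT (2 ^ n) (2 ^ n) := by
      refine prodT_congr _ _ _ (fun j hj => ?_)
      rw [tmSeq_block (n + 1) j (by omega), tmSeq_block n j hj]
    have hsign : prodT (2 ^ (n + 1) + 2 ^ n) (2 ^ n) = (prodT (2 ^ n) (2 ^ n)).bar := by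
      refine prodT_sign _ _ _ (fun j hj => ?_)
      have e : 2 ^ (n + 1) + 2 ^ n + j = 2 ^ (n + 1) + (2 ^ n + j) := by omega
      rw [e, tmSeq_block (n + 1) (2 ^ n + j) (by omega)]
    obtain ⟨r1, r2, r3, r4⟩ := extractRecs n hn ih
    rw [hsplit, hcongr, hsign, ih, r1, r2, r3, r4]
    simp only [M2.bar, M2.mul, psi_add, psi_mul, psi_neg, psi_X, psi_psi, M2.mk.injEq]
    refine ⟨trivial, by ring, trivial, by ring⟩

/-- the doubling recurrences at levels k+2 → k+3, for Part B. -/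
lemma recsAt (k : ℕ) :
    Ptm (2 ^ (k + 3) - 1) =
      psi (Qtm (2 ^ (k + 2) - 1)) * Ptm (2 ^ (k + 2) - 1)
        + -X * psi (Ptm (2 ^ (k + 2) - 1)) * Ptm (2 ^ (k + 2) - 2) ∧
    Ptm (2 ^ (k + 3) - 2) =
      psi (Qtm (2 ^ (k + 2) - 2)) * Ptm (2 ^ (k + 2) - 1)
        + -X * psi (Ptm (2 ^ (k + 2) - 2)) * Ptm (2 ^ (k + 2) - 2) ∧
    Qtm (2 ^ (k + 3) - 1) =
      psi (Qtm (2 ^ (k + 2) - 1)) * Qtm (2 ^ (k + 2) - 1)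
        + -X * psi (Ptm (2 ^ (k + 2) - 1)) * Qtm (2 ^ (k + 2) - 2) ∧
    Qtm (2 ^ (k + 3) - 2) =
      psi (Qtm (2 ^ (k + 2) - 2)) * Qtm (2 ^ (k + 2) - 1)
        + -X * psi (Ptm (2 ^ (k + 2) - 2)) * Qtm (2 ^ (k + 2) - 2) := by
  have h := extractRecs (k + 2) (by omega) (Ematrix (k + 2) (by omega))
  rwa [show k + 2 + 1 = k + 3 from rfl] at h

/-! ### Part B: reduction modulo 4 -/

abbrev R4 := Polynomial (ZMod 4)

noncomputable def phi4 : ℤ[X] →+* R4 := Polynomial.mapRingHom (Int.castRingHom (ZMod 4))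

lemma phi4_X : phi4 X = X := by simp [phi4]

lemma phi4_psi (p : ℤ[X]) : phi4 (psi p) = (phi4 p).comp (-X) := by
  show ((p.comp (-X)).map _) = _
  rw [Polynomial.map_comp]
  simp [phi4]

lemma four_eq_zero : (4 : R4) = 0 := by
  rw [show (4 : R4) = C (4 : ZMod 4) from (map_ofNat C 4).symm,
    show (4 : ZMod 4) = 0 from rfl, map_zero]

lemma two_comp (p : R4) : 2 * (p.comp (-X)) = 2 * p := by
  induction p using Polynomial.induction_on' with
  | add p q hp hq => rw [add_comp, mul_add, hp, hq, ← mul_add]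
  | monomial n a =>
    rw [← C_mul_X_pow_eq_monomial, mul_comp, C_comp, pow_comp, X_comp]
    rcases Nat.even_or_odd n with he | ho
    · rw [he.neg_pow]
    · rw [ho.neg_pow]
      linear_combination (-(C a * X ^ n)) * four_eq_zero

lemma two_ofNat_comp : ((2 : R4)).comp (-X) = 2 := by simp

lemma two_mul_comp (p : R4) : (2 * p).comp (-X) = 2 * p := by
  rw [mul_comp, two_ofNat_comp, two_comp]

/-- S in R4 -/
noncomputable def SR (n : ℕ) : R4 := ∑ j ∈ Finset.range n, X ^ (2 ^ j)
/-- T_m = Σ_{j<m} X^(2^(j+1)-1) -/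
noncomputable def TT (m : ℕ) : R4 := ∑ j ∈ Finset.range m, X ^ (2 ^ (j + 1) - 1)
/-- B at level k+2 -/
noncomputable def BB (k : ℕ) : R4 := 1 + TT (k + 1)

noncomputable def aR : ℕ → R4
  | 0 => 0
  | k + 1 => aR k + SR (k + 1) + X

noncomputable def dR : ℕ → R4
  | 0 => X
  | k + 1 => dR k + SR (k + 1) + SR (k + 2) + X

lemma TT_comp (m : ℕ) : (TT m).comp (-X) = -TT m := by
  induction m with
  | zero => simp [TT]
  | succ m ih =>
    have hodd : Odd (2 ^ (m + 1) - 1) := by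
      rw [Nat.odd_iff]
      have h2 : 2 ^ (m + 1) = 2 * 2 ^ m := by ring
      have hp : 0 < 2 ^ m := pow_pos (by norm_num) m
      omega
    rw [TT, Finset.sum_range_succ, ← TT, add_comp, ih, pow_comp, X_comp, hodd.neg_pow]
    ring

lemma BB_comp (k : ℕ) : (BB k).comp (-X) = 2 - BB k := by
  rw [BB, add_comp, one_comp, TT_comp]
  ring

lemma X_mul_BB (k : ℕ) : X * BB k = SR (k + 2) := by
  have h1 : ∀ j, (X : R4) * X ^ (2 ^ (j + 1) - 1) = X ^ (2 ^ (j + 1)) := by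
    intro j
    have hp : 0 < 2 ^ (j + 1) := pow_pos (by norm_num) _
    rw [← pow_succ']
    congr 1
    omega
  have hR : SR (k + 2) = (∑ j ∈ Finset.range (k + 1), (X : R4) ^ (2 ^ (j + 1))) + X := by
    rw [SR, Finset.sum_range_succ']
    norm_num
  rw [BB, TT, mul_add, mul_one, Finset.mul_sum, Finset.sum_congr rfl (fun j _ => h1 j), hR]
  exact add_comm _ _

lemma SR_succ (n : ℕ) : SR (n + 1) = SR n + X ^ (2 ^ n) := Finset.sum_range_succ _ _

lemma sq_sum (m : ℕ) (f : ℕ → R4) :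
    ∃ p, (∑ j ∈ Finset.range m, f j) ^ 2 = (∑ j ∈ Finset.range m, f j ^ 2) + 2 * p := by
  induction m with
  | zero => exact ⟨0, by simp⟩
  | succ m ih =>
    obtain ⟨p, hp⟩ := ih
    refine ⟨p + (∑ j ∈ Finset.range m, f j) * f m, ?_⟩
    rw [Finset.sum_range_succ, Finset.sum_range_succ]
    linear_combination hp

lemma TT_sq (k : ℕ) :
    ∃ p, TT (k + 1) ^ 2 = (∑ j ∈ Finset.range (k + 1), X ^ (2 ^ (j + 2) - 2)) + 2 * p := by
  obtain ⟨p, hp⟩ := sq_sum (k + 1) (fun j => X ^ (2 ^ (j + 1) - 1))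
  refine ⟨p, ?_⟩
  rw [TT, hp]
  congr 1
  refine Finset.sum_congr rfl (fun j _ => ?_)
  rw [← pow_mul]
  congr 1
  have hp1 : 0 < 2 ^ (j + 1) := pow_pos (by norm_num) _
  have h2 : 2 ^ (j + 2) = 2 ^ (j + 1) * 2 := by ring
  omega

lemma BB_succ (k : ℕ) :
    BB (k + 1) = 1 + X + X * (∑ j ∈ Finset.range (k + 1), X ^ (2 ^ (j + 2) - 2)) := by
  rw [BB, TT, Finset.sum_range_succ', Finset.mul_sum]
  have h1 : ∀ j, (X : R4) * X ^ (2 ^ (j + 2) - 2) = X ^ (2 ^ (j + 1 + 1) - 1) := by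
    intro j
    have e2 : j + 1 + 1 = j + 2 := rfl
    rw [e2]
    have hj : 0 < 2 ^ j := pow_pos (by norm_num) j
    have h2 : 2 ^ (j + 2) = 4 * 2 ^ j := by ring
    rw [← pow_succ']
    congr 1
    omega
  rw [Finset.sum_congr rfl (fun j _ => (h1 j).symm)]
  norm_num
  ring

lemma tmSeq_two : tmSeq 2 = -1 := by
  have t1 : tmSeq 1 = -1 := by
    have h := tmSeq_two_mul_add_one 0
    rw [tmSeq_zero] at h
    norm_num at h
    exact h
  have := tmSeq_two_mul 1
  rw [t1] at this
  simpa using this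

lemma tmSeq_three : tmSeq 3 = 1 := by
  have t1 : tmSeq 1 = -1 := by
    have h := tmSeq_two_mul_add_one 0
    rw [tmSeq_zero] at h
    norm_num at h
    exact h
  have := tmSeq_two_mul_add_one 1
  rw [t1] at this
  simpa using this

lemma Ptm_two : Ptm 2 = 1 - X := by
  have h : Ptm 2 = Ptm 1 + C (tmSeq 2) * X * Ptm 0 := Ptm_step 0
  have hP1 : Ptm 1 = 1 := by rw [Ptm]
  have hP0 : Ptm 0 = 1 := by rw [Ptm]
  rw [h, tmSeq_two, hP1, hP0]
  simp
  ring

lemma Ptm_three : Ptm 3 = 1 := by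
  have h : Ptm 3 = Ptm 2 + C (tmSeq 3) * X * Ptm 1 := Ptm_step 1
  have hP1 : Ptm 1 = 1 := by rw [Ptm]
  rw [h, tmSeq_three, Ptm_two, hP1]
  simp

lemma Qtm_two : Qtm 2 = 1 - 2 * X := by
  have h : Qtm 2 = Qtm 1 + C (tmSeq 2) * X * Qtm 0 := Qtm_step 0
  have hQ1 : Qtm 1 = 1 - X := by rw [Qtm]
  have hQ0 : Qtm 0 = 1 := by rw [Qtm]
  rw [h, tmSeq_two, hQ1, hQ0]
  simp
  ring

lemma Qtm_three : Qtm 3 = 1 - X - X ^ 2 := by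
  have h : Qtm 3 = Qtm 2 + C (tmSeq 3) * X * Qtm 1 := Qtm_step 1
  have hQ1 : Qtm 1 = 1 - X := by rw [Qtm]
  rw [h, tmSeq_three, Qtm_two, hQ1]
  simp
  ring

/-- the mapped recurrences -/
lemma mrecs (k : ℕ) :
    phi4 (Ptm (2 ^ (k + 3) - 1)) =
      (phi4 (Qtm (2 ^ (k + 2) - 1))).comp (-X) * phi4 (Ptm (2 ^ (k + 2) - 1))
        + -X * (phi4 (Ptm (2 ^ (k + 2) - 1))).comp (-X) * phi4 (Ptm (2 ^ (k + 2) - 2)) ∧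
    phi4 (Ptm (2 ^ (k + 3) - 2)) =
      (phi4 (Qtm (2 ^ (k + 2) - 2))).comp (-X) * phi4 (Ptm (2 ^ (k + 2) - 1))
        + -X * (phi4 (Ptm (2 ^ (k + 2) - 2))).comp (-X) * phi4 (Ptm (2 ^ (k + 2) - 2)) ∧
    phi4 (Qtm (2 ^ (k + 3) - 1)) =
      (phi4 (Qtm (2 ^ (k + 2) - 1))).comp (-X) * phi4 (Qtm (2 ^ (k + 2) - 1))
        + -X * (phi4 (Ptm (2 ^ (k + 2) - 1))).comp (-X) * phi4 (Qtm (2 ^ (k + 2) - 2)) ∧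
    phi4 (Qtm (2 ^ (k + 3) - 2)) =
      (phi4 (Qtm (2 ^ (k + 2) - 2))).comp (-X) * phi4 (Qtm (2 ^ (k + 2) - 1))
        + -X * (phi4 (Ptm (2 ^ (k + 2) - 2))).comp (-X) * phi4 (Qtm (2 ^ (k + 2) - 2)) := by
  obtain ⟨r1, r2, r3, r4⟩ := recsAt k
  refine ⟨?_, ?_, ?_, ?_⟩
  · rw [r1]; simp [map_add, map_mul, map_neg, phi4_psi, phi4_X]
  · rw [r2]; simp [map_add, map_mul, map_neg, phi4_psi, phi4_X]
  · rw [r3]; simp [map_add, map_mul, map_neg, phi4_psi, phi4_X]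
  · rw [r4]; simp [map_add, map_mul, map_neg, phi4_psi, phi4_X]

/-- the mod-4 invariant -/
lemma invariant : ∀ k : ℕ,
    phi4 (Ptm (2 ^ (k + 2) - 1)) = 1 + 2 * aR k ∧
    (∃ e, phi4 (Ptm (2 ^ (k + 2) - 2)) = BB k + 2 * e) ∧
    phi4 (Qtm (2 ^ (k + 2) - 1)) = 1 + X * phi4 (Ptm (2 ^ (k + 2) - 2)) + 2 * SR (k + 1) ∧
    phi4 (Qtm (2 ^ (k + 2) - 2)) = 1 + 2 * dR k := by
  intro k
  induction k with
  | zero =>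
    have e1 : (2 : ℕ) ^ (0 + 2) - 1 = 3 := by norm_num
    have e2 : (2 : ℕ) ^ (0 + 2) - 2 = 2 := by norm_num
    rw [e1, e2, Ptm_three, Ptm_two, Qtm_three, Qtm_two]
    have hBB0 : BB 0 = 1 + X := by
      rw [BB, TT]
      norm_num
    have hSR1 : SR 1 = X := by
      rw [SR]
      norm_num
    have hp3 : phi4 (1 : ℤ[X]) = 1 := map_one _
    have hp2 : phi4 (1 - X) = 1 - X := by simp [phi4]
    have hq3 : phi4 (1 - X - X ^ 2) = 1 - X - X ^ 2 := by simp [phi4]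
    have hq2 : phi4 (1 - 2 * X) = 1 - 2 * X := by simp [phi4]
    refine ⟨?_, ⟨X, ?_⟩, ?_, ?_⟩
    · rw [hp3]; simp [aR]
    · rw [hp2, hBB0]
      linear_combination (-X : R4) * four_eq_zero
    · rw [hq3, hp2, hSR1]
      linear_combination (-X : R4) * four_eq_zero
    · rw [hq2]
      simp only [dR]
      linear_combination (-X : R4) * four_eq_zero
  | succ k ih =>
    obtain ⟨ha, ⟨e, hb⟩, hc, hd⟩ := ih
    rw [hb] at hc
    obtain ⟨m1, m2, m3, m4⟩ := mrecs k
    have cA : (phi4 (Ptm (2 ^ (k + 2) - 1))).comp (-X) = 1 + 2 * aR k := by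
      simp only [ha, add_comp, mul_comp, one_comp, X_comp, two_ofNat_comp, two_comp]
    have cB : (phi4 (Ptm (2 ^ (k + 2) - 2))).comp (-X) = 2 - BB k + 2 * e := by
      simp only [hb, add_comp, mul_comp, X_comp, two_ofNat_comp, two_comp, BB_comp]
    have cC : (phi4 (Qtm (2 ^ (k + 2) - 1))).comp (-X)
        = 1 + -X * (2 - BB k + 2 * e) + 2 * SR (k + 1) := by
      simp only [hc, add_comp, mul_comp, one_comp, X_comp, two_ofNat_comp, two_comp, BB_comp]
    have cD : (phi4 (Qtm (2 ^ (k + 2) - 2))).comp (-X) = 1 + 2 * dR k := by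
      simp only [hd, add_comp, mul_comp, one_comp, X_comp, two_ofNat_comp, two_comp]
    refine ⟨?_, ?_, ?_, ?_⟩
    · rw [m1, cC, cA, ha, hb]
      simp only [aR]
      linear_combination (SR (k + 1) * aR k - X - X * aR k - 2 * X * aR k * e - X * e)
        * four_eq_zero
    · obtain ⟨pp, hpp⟩ := TT_sq k
      refine ⟨aR k + dR k + X * pp - X, ?_⟩
      rw [m2, cD, cB, ha, hb, BB_succ k, show BB k = 1 + TT (k + 1) from rfl]
      linear_combination X * hpp + (-(X * e) - X * e ^ 2 + aR k * dR k) * four_eq_zero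
    · rw [m3, m2, cC, cA, cD, cB, ha, hb, hc, hd, ← X_mul_BB k]
      linear_combination (BB k * SR (k + 1) * X + SR (k + 1) + SR (k + 1) ^ 2 - SR (k + 1) * X
        - X - X * aR k - 2 * X * aR k * dR k - X * dR k) * four_eq_zero
    · rw [m4, cD, cB, hc, hd]
      simp only [dR]
      rw [← X_mul_BB k]
      linear_combination (BB k * X * dR k + SR (k + 1) * dR k - X - X * dR k) * four_eq_zero

lemma two_aR (m' : ℕ) :
    2 * aR (2 * m') = 2 * (∑ j ∈ Finset.range m', (X : R4) ^ (2 ^ (2 * j + 1))) := by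
  induction m' with
  | zero => simp [aR]
  | succ m' ih =>
    rw [show 2 * (m' + 1) = 2 * m' + 1 + 1 from by omega]
    simp only [aR]
    rw [Finset.sum_range_succ, show 2 * m' + 1 + 1 = (2 * m' + 1) + 1 from rfl,
      SR_succ (2 * m' + 1)]
    linear_combination ih + (SR (2 * m' + 1) + X) * four_eq_zero

/-- P(2^(2m)−1)(x) ≡ 1 + 2·S^o_{m−1}(x) (mod 4). -/
theorem Ptm_pow_even_sub_one_mod_four (m : ℕ) (hm : 1 ≤ m) :
    ∀ k, (4 : ℤ) ∣ (Ptm (2 ^ (2 * m) - 1) - (1 + 2 * SoPoly (m - 1))).coeff k := by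
  intro k
  obtain ⟨m', rfl⟩ : ∃ m', m = m' + 1 := ⟨m - 1, by omega⟩
  have hinv := (invariant (2 * m')).1
  have hidx : 2 * (m' + 1) = 2 * m' + 2 := by omega
  have hSo : (m' + 1 - 1) = m' := by omega
  rw [hidx, hSo]
  have hphiSo : phi4 (SoPoly m') = ∑ j ∈ Finset.range m', (X : R4) ^ (2 ^ (2 * j + 1)) := by
    simp [SoPoly, phi4, Polynomial.map_sum]
  have key : phi4 (Ptm (2 ^ (2 * m' + 2) - 1) - (1 + 2 * SoPoly m')) = 0 := by
    rw [map_sub, map_add, map_one, map_mul, hinv, hphiSo]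
    have h2 : phi4 (2 : ℤ[X]) = 2 := by simp [phi4]
    rw [h2]
    linear_combination two_aR m'
  have hco := congrArg (fun p => Polynomial.coeff p k) key
  simp only [Polynomial.coeff_zero] at hco
  have h1 : phi4 (Ptm (2 ^ (2 * m' + 2) - 1) - (1 + 2 * SoPoly m'))
      = Polynomial.map (Int.castRingHom (ZMod 4))
          (Ptm (2 ^ (2 * m' + 2) - 1) - (1 + 2 * SoPoly m')) := rfl
  rw [h1, Polynomial.coeff_map] at hco
  exact (ZMod.intCast_zmod_eq_zero_iff_dvd _ 4).mp hco
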